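/- Let d ≥ 1, let v, u_1, …, u_m be m + 1 pairwise distinct coordinate indices in [d] (m ≥ 1), let e_s denote the s-th standard basis vector of ℝ^d, and set x_i := e_v + e_{u_i} for i = 1,…,m (the data points associated with the m edges covered by vertex v in the k-means instance built from a triangle-free graph). Let μ := (1/m)·∑_{i=1}^m x_i. Then ∑_{i=1}^m ‖x_i − μ‖² = m − 1. -/

import Mathlib

/-- In the Vertex-Cover-to-k-means reduction, the cluster of the `m` edge-points
`x i = e v + e (u i)` (with `v`, `u 1`, …, `u m` pairwise distinct coordinates) has k-means cost
`∑ i ‖x i − μ‖² = m − 1`, where `μ` is its mean. -/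
theorem vertex_cover_cluster_cost
    (d m : ℕ) (hm : 1 ≤ m)
    (v : Fin d) (u : Fin m → Fin d)
    (hu : Function.Injective u) (huv : ∀ i, u i ≠ v)
    (x : Fin m → EuclideanSpace ℝ (Fin d))
    (hx : ∀ i, x i = EuclideanSpace.single v (1 : ℝ) + EuclideanSpace.single (u i) (1 : ℝ))
    (μ : EuclideanSpace ℝ (Fin d)) (hμ : μ = (m : ℝ)⁻¹ • ∑ i, x i) :
    ∑ i, ‖x i - μ‖ ^ 2 = (m : ℝ) - 1 := by
  have hm0 : (m : ℝ) ≠ 0 := Nat.cast_ne_zero.mpr (by omega)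
  have key : ∀ i j, (inner ℝ (x i) (x j) : ℝ) = 1 + (if i = j then (1 : ℝ) else 0) := by
    intro i j
    rw [hx i, hx j]
    rw [inner_add_left, inner_add_right, inner_add_right]
    simp only [EuclideanSpace.inner_single_left, EuclideanSpace.single_apply, map_one,
      one_mul, starRingEnd_apply]
    have h1 : (v = u j) = False := by simp [Ne.symm (huv j)]
    have h2 : (u i = v) = False := by simp [huv i]
    have h3 : (u i = u j) = (i = j) := by
      simp only [eq_iff_iff]; exact ⟨fun h => hu h, fun h => by rw [h]⟩
    simp [h1, h2, h3]
  have hxμ : ∀ i, (inner ℝ (x i) (μ) : ℝ) = 1 + (m : ℝ)⁻¹ := by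
    intro i
    rw [hμ, real_inner_smul_right, inner_sum]
    simp only [key, Finset.sum_add_distrib, Finset.sum_const, Finset.card_univ,
      Fintype.card_fin, nsmul_eq_mul, mul_one, Finset.sum_ite_eq, Finset.mem_univ, if_true]
    field_simp
  have hμμ : (inner ℝ (μ) (μ) : ℝ) = 1 + (m : ℝ)⁻¹ := by
    rw [hμ, real_inner_smul_left, sum_inner, ← hμ,
      Finset.sum_congr rfl (fun i _ => hxμ i)]
    simp only [Finset.sum_const, Finset.card_univ, Fintype.card_fin, nsmul_eq_mul]
    field_simp
  have hterm : ∀ i, ‖x i - μ‖ ^ 2 = 1 - (m : ℝ)⁻¹ := by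
    intro i
    rw [norm_sub_sq_real, ← real_inner_self_eq_norm_sq (x i), ← real_inner_self_eq_norm_sq μ,
      key i i, hxμ i, hμμ]
    simp
    ring
  rw [Finset.sum_congr rfl (fun i _ => hterm i)]
  simp only [Finset.sum_const, Finset.card_univ, Fintype.card_fin, nsmul_eq_mul]
  field_simp
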